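/- For λ ∈ [0,1], let u(s) = 2^{2s-1} 3^{1-s} + 2^{1-2s} 3^s + 4√3 for s ∈ [0,1]. Then u is decreasing on (0,1/2), increasing on (1/2,1), and 8 < 6√3 = u(1/2) ≤ u(λ) ≤ u(0) = 7/2 + 4√3; in particular u(λ) ≠ 8 for all λ ∈ [0,1]. -/

import Mathlib

private lemma u_rewrite (s : ℝ) :
    (2 : ℝ) ^ (2 * s - 1) * (3 : ℝ) ^ (1 - s) + (2 : ℝ) ^ (1 - 2 * s) * (3 : ℝ) ^ s
      = 3/2 * ((4:ℝ)/3) ^ s + 2 / ((4:ℝ)/3) ^ s := by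
  have h4 : (2:ℝ) ^ (2*s) = (4:ℝ) ^ s := by
    rw [show (4:ℝ) = (2:ℝ) ^ (2:ℝ) by
      rw [show (2:ℝ) = ((2:ℕ):ℝ) by norm_num, Real.rpow_natCast]; norm_num,
      ← Real.rpow_mul (by norm_num)]
  have h2 : (2:ℝ) ^ (2*s - 1) = (4:ℝ)^s / 2 := by
    rw [Real.rpow_sub (by norm_num), Real.rpow_one, h4]
  have h2' : (2:ℝ) ^ (1 - 2*s) = 2 / (4:ℝ)^s := by
    rw [Real.rpow_sub (by norm_num), Real.rpow_one, h4]
  have h3 : (3:ℝ) ^ (1 - s) = 3 / (3:ℝ)^s := by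
    rw [Real.rpow_sub (by norm_num), Real.rpow_one]
  have hd : ((4:ℝ)/3) ^ s = (4:ℝ)^s / (3:ℝ)^s := Real.div_rpow (by norm_num) (by norm_num) s
  have p4 : (0:ℝ) < (4:ℝ)^s := Real.rpow_pos_of_pos (by norm_num) s
  have p3 : (0:ℝ) < (3:ℝ)^s := Real.rpow_pos_of_pos (by norm_num) s
  rw [h2, h2', h3, hd]
  field_simp

private lemma bounds_aux (t s3 : ℝ) (hs3 : s3^2 = 3) (htp : 0 < t) (ht1 : 1 ≤ t)
    (ht2 : t ≤ 4/3) : 2*s3 ≤ 3/2*t + 2/t ∧ 3/2*t + 2/t ≤ 7/2 := by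
  constructor
  · have key : 3/2*t + 2/t - 2*s3 = (s3*t-2)^2/(2*t) := by
      field_simp
      linear_combination (-(t^2))*hs3
    have := div_nonneg (sq_nonneg (s3*t-2)) (by linarith : (0:ℝ) ≤ 2*t)
    linarith
  · have key : 7/2 - (3/2*t+2/t) = (4-3*t)*(t-1)/(2*t) := by field_simp; ring
    have h1 : (0:ℝ) ≤ 4-3*t := by linarith
    have h2 : (0:ℝ) ≤ t-1 := by linarith
    have := div_nonneg (mul_nonneg h1 h2) (by linarith : (0:ℝ) ≤ 2*t)
    linarith

theorem auxiliary_function_u_ne_eight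
    (u : ℝ → ℝ)
    (hu : ∀ s : ℝ, u s =
      (2 : ℝ) ^ (2 * s - 1) * (3 : ℝ) ^ (1 - s) + (2 : ℝ) ^ (1 - 2 * s) * (3 : ℝ) ^ s
        + 4 * Real.sqrt 3) :
    StrictAntiOn u (Set.Ioo 0 (1 / 2)) ∧ StrictMonoOn u (Set.Ioo (1 / 2) 1) ∧
      (8 : ℝ) < 6 * Real.sqrt 3 ∧ u (1 / 2) = 6 * Real.sqrt 3 ∧
      u 0 = 7 / 2 + 4 * Real.sqrt 3 ∧
      (∀ l ∈ Set.Icc (0 : ℝ) 1, u (1 / 2) ≤ u l ∧ u l ≤ u 0) ∧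
      (∀ l ∈ Set.Icc (0 : ℝ) 1, u l ≠ 8) := by
  have hs3 : Real.sqrt 3 ^ 2 = 3 := Real.sq_sqrt (by norm_num)
  have hs3p : 0 < Real.sqrt 3 := Real.sqrt_pos.mpr (by norm_num)
  have hc : (1:ℝ) < 4/3 := by norm_num
  have hcp : (0:ℝ) < 4/3 := by norm_num
  have hu' : ∀ s : ℝ, u s = 3/2 * ((4:ℝ)/3) ^ s + 2 / ((4:ℝ)/3) ^ s + 4 * Real.sqrt 3 := by
    intro s; rw [hu, u_rewrite]
  have hpos : ∀ s : ℝ, (0:ℝ) < ((4:ℝ)/3) ^ s := fun s => Real.rpow_pos_of_pos hcp s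
  have hlt : ∀ {a b : ℝ}, a < b → ((4:ℝ)/3) ^ a < ((4:ℝ)/3) ^ b :=
    fun {a b} h => Real.rpow_lt_rpow_left_iff hc |>.mpr h
  have hle : ∀ {a b : ℝ}, a ≤ b → ((4:ℝ)/3) ^ a ≤ ((4:ℝ)/3) ^ b :=
    fun {a b} h => Real.rpow_le_rpow_left_iff hc |>.mpr h
  have hadd : ∀ a b : ℝ, ((4:ℝ)/3) ^ (a+b) = ((4:ℝ)/3)^a * ((4:ℝ)/3)^b :=
    fun a b => Real.rpow_add hcp a b
  -- value at 1/2
  set t0 : ℝ := ((4:ℝ)/3) ^ ((1:ℝ)/2) with ht0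
  have ht0p : 0 < t0 := hpos _
  have ht0sq : t0 ^ 2 = 4/3 := by
    rw [ht0, ← Real.rpow_natCast _ 2, ← Real.rpow_mul hcp.le]
    norm_num
  have hfac : (Real.sqrt 3 * t0 - 2) * (Real.sqrt 3 * t0 + 2) = 0 := by
    linear_combination t0 ^ 2 * hs3 + 3 * ht0sq
  have hst : Real.sqrt 3 * t0 = 2 := by
    rcases mul_eq_zero.mp hfac with h | h
    · linarith
    · nlinarith
  have huhalf : u (1/2) = 6 * Real.sqrt 3 := by
    rw [hu' (1/2), ← ht0]
    field_simp
    nlinarith [hst, hs3, ht0p]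
  have hu0 : u 0 = 7/2 + 4 * Real.sqrt 3 := by
    rw [hu' 0, Real.rpow_zero]; norm_num
  -- strict anti on (0, 1/2)
  have hanti : StrictAntiOn u (Set.Ioo 0 (1/2)) := by
    intro a ha b hb hab
    have hta := hpos a; have htb := hpos b
    have h1 : ((4:ℝ)/3)^a < ((4:ℝ)/3)^b := hlt hab
    have h2 : ((4:ℝ)/3)^a * ((4:ℝ)/3)^b < 4/3 := by
      rw [← hadd]
      calc ((4:ℝ)/3) ^ (a+b) < ((4:ℝ)/3) ^ (1:ℝ) := hlt (by linarith [ha.2, hb.2])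
        _ = 4/3 := Real.rpow_one _
    rw [hu' a, hu' b]
    have key : (3/2 * ((4:ℝ)/3)^a + 2 / ((4:ℝ)/3)^a) - (3/2 * ((4:ℝ)/3)^b + 2 / ((4:ℝ)/3)^b)
        = (((4:ℝ)/3)^b - ((4:ℝ)/3)^a) * (4 - 3 * (((4:ℝ)/3)^a * ((4:ℝ)/3)^b))
          / (2 * (((4:ℝ)/3)^a * ((4:ℝ)/3)^b)) := by
      field_simp
      ring
    have : 0 < (((4:ℝ)/3)^b - ((4:ℝ)/3)^a) * (4 - 3 * (((4:ℝ)/3)^a * ((4:ℝ)/3)^b))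
          / (2 * (((4:ℝ)/3)^a * ((4:ℝ)/3)^b)) := by
      apply div_pos (mul_pos (by linarith) (by linarith)) (by positivity)
    linarith
  -- strict mono on (1/2, 1)
  have hmono : StrictMonoOn u (Set.Ioo (1/2) 1) := by
    intro a ha b hb hab
    have hta := hpos a; have htb := hpos b
    have h1 : ((4:ℝ)/3)^a < ((4:ℝ)/3)^b := hlt hab
    have h2 : (4:ℝ)/3 < ((4:ℝ)/3)^a * ((4:ℝ)/3)^b := by
      rw [← hadd]
      calc (4:ℝ)/3 = ((4:ℝ)/3) ^ (1:ℝ) := (Real.rpow_one _).symm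
        _ < ((4:ℝ)/3) ^ (a+b) := hlt (by linarith [ha.1, hb.1])
    rw [hu' a, hu' b]
    have key : (3/2 * ((4:ℝ)/3)^b + 2 / ((4:ℝ)/3)^b) - (3/2 * ((4:ℝ)/3)^a + 2 / ((4:ℝ)/3)^a)
        = (((4:ℝ)/3)^b - ((4:ℝ)/3)^a) * (3 * (((4:ℝ)/3)^a * ((4:ℝ)/3)^b) - 4)
          / (2 * (((4:ℝ)/3)^a * ((4:ℝ)/3)^b)) := by
      field_simp
      ring
    have : 0 < (((4:ℝ)/3)^b - ((4:ℝ)/3)^a) * (3 * (((4:ℝ)/3)^a * ((4:ℝ)/3)^b) - 4)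
          / (2 * (((4:ℝ)/3)^a * ((4:ℝ)/3)^b)) := by
      apply div_pos (mul_pos (by linarith) (by linarith)) (by positivity)
    linarith
  have h8 : (8:ℝ) < 6 * Real.sqrt 3 := by nlinarith
  have hbounds : ∀ l ∈ Set.Icc (0:ℝ) 1, u (1/2) ≤ u l ∧ u l ≤ u 0 := by
    intro l hl
    have htp := hpos l
    have ht1 : 1 ≤ ((4:ℝ)/3)^l := by
      have := hle hl.1; rwa [Real.rpow_zero] at this
    have ht2 : ((4:ℝ)/3)^l ≤ 4/3 := by
      have := hle hl.2; rwa [Real.rpow_one] at this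
    obtain ⟨H1, H2⟩ := bounds_aux _ _ hs3 htp ht1 ht2
    rw [huhalf, hu0, hu' l]
    constructor <;> linarith
  refine ⟨hanti, hmono, h8, huhalf, hu0, hbounds, ?_⟩
  intro l hl
  have := (hbounds l hl).1
  rw [huhalf] at this
  linarith
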